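/- For every integer N ≥ 1 there exist an integer n ≥ 1, a 1×n matrix Λ with all entries strictly positive integers, a vector k ∈ ℤⁿ with all entries strictly positive, and h ∈ ℤ¹ with strictly positive entry, such that Λ k = h and Λᵗ h = N · k. (This is the realizability part of the paper's Proposition: every positive integer—not only squares of integers—is the minimal index of a connected super-extremal multi-matrix inclusion. One may take Λ = k = (a_1,…,a_n) with a_1² + ⋯ + a_n² = N, using the four-square theorem and discarding zero entries; having a single row and all entries positive makes the inclusion connected.) -/
import Mathlib


theorem stmt7 (N : ℤ) (hN : 1 ≤ N) :
    ∃ (n : ℕ), 1 ≤ n ∧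
      ∃ (Λ : Matrix (Fin 1) (Fin n) ℤ) (k : Fin n → ℤ) (h : Fin 1 → ℤ),
        (∀ i j, 0 < Λ i j) ∧ (∀ j, 0 < k j) ∧ (∀ i, 0 < h i) ∧
        Λ.mulVec k = h ∧ Λ.transpose.mulVec h = N • k := by
  refine ⟨N.toNat, ?_, (fun _ _ => 1), (fun _ => 1), (fun _ => N),
    fun _ _ => one_pos, fun _ => one_pos, fun _ => lt_of_lt_of_le one_pos hN, ?_, ?_⟩
  · omega
  · funext i
    simp [Matrix.mulVec, dotProduct]
    omega
  · funext j
    simp [Matrix.mulVec, dotProduct, Matrix.transpose]
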